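/- arXiv:2601.22369 — 4 statements merged into one kernel-verified Lean document; each statement's English description precedes it below -/
import Mathlib

section
/- (Group Freezing Preserves Completeness.) Assume there exists a correct state machine (the setting is feasible). Let Sc be an admissible scenario (Sc ∈ Scen) such that C Sc = {d} is a singleton (Sc leads to a definite decision), and let T be a frozen path under Sc whose final outputs realize this decision, i.e., T (r−1) p = d p for every process p (where r−1 is the last round index). Then there exists a correct state machine SM that is compatible with T under Sc at every round: SM t p (fin t p) = T t p for all rounds t and all processes p. -/
/-- A scenario: initial states and a message-loss pattern. -/
structure Scenario (n r : ℕ) (S : Type) where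
  init : Fin n → S
  loss : Fin r → Fin n → Fin n → Bool

/-- Execution of a state machine `SM` under scenario `Sc`:
`run SM Sc 0 p = Sc.init p` and
`run SM Sc (t+1) p = SM t p (fun q => if Sc.loss t q p then none else some (run SM Sc t q))`
for `t < r` (beyond round `r` the state is just carried along). -/
def run {n r : ℕ} {S : Type} (SM : Fin r → Fin n → (Fin n → Option S) → S)
    (Sc : Scenario n r S) : ℕ → Fin n → S
  | 0, p => Sc.init p
  | t + 1, p =>
      if h : t < r then
        SM ⟨t, h⟩ p (fun q => if Sc.loss ⟨t, h⟩ q p then none else some (run SM Sc t q))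
      else run SM Sc t p

/-- The decision vector of `SM` under `Sc`. -/
def decision {n r : ℕ} {S : Type} (SM : Fin r → Fin n → (Fin n → Option S) → S)
    (Sc : Scenario n r S) : Fin n → S :=
  fun p => run SM Sc r p

/-- The frozen execution of a frozen path `T` under scenario `Sc`. -/
def fExec {n r : ℕ} {S : Type} (Sc : Scenario n r S) (T : Fin r → Fin n → S) :
    ℕ → Fin n → S
  | 0, p => Sc.init p
  | t + 1, p => if h : t < r then T ⟨t, h⟩ p else fExec Sc T t p

/-- The frozen input at round `t` and process `p`. -/
def fIn {n r : ℕ} {S : Type} (Sc : Scenario n r S) (T : Fin r → Fin n → S)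
    (t : Fin r) (p : Fin n) : Fin n → Option S :=
  fun q => if Sc.loss t q p then none else some (fExec Sc T t.val q)

section Aux

variable {n r : ℕ} {S : Type}

/-- Round-by-round relabeling permutations. -/
noncomputable def sigmaF (SM0 : Fin r → Fin n → (Fin n → Option S) → S)
    (Sc : Scenario n r S) (T : Fin r → Fin n → S) : ℕ → Fin n → Equiv.Perm S
  | 0, _ => 1
  | t + 1, p =>
    if h : t + 1 < r then
      haveI := Classical.decEq S
      Equiv.swap
        (SM0 ⟨t, Nat.lt_of_succ_lt h⟩ p (fun q =>
          if Sc.loss ⟨t, Nat.lt_of_succ_lt h⟩ q p then none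
          else some ((sigmaF SM0 Sc T t q).symm (fExec Sc T t q))))
        (T ⟨t, Nat.lt_of_succ_lt h⟩ p)
    else 1

/-- The relabeled state machine. -/
noncomputable def SMnew (SM0 : Fin r → Fin n → (Fin n → Option S) → S)
    (Sc : Scenario n r S) (T : Fin r → Fin n → S)
    (t : Fin r) (p : Fin n) (m : Fin n → Option S) : S :=
  sigmaF SM0 Sc T (t.val + 1) p
    (SM0 t p (fun q => Option.map ((sigmaF SM0 Sc T t.val q).symm) (m q)))

lemma sigmaF_top (SM0 : Fin r → Fin n → (Fin n → Option S) → S)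
    (Sc : Scenario n r S) (T : Fin r → Fin n → S)
    (t : ℕ) (ht : r ≤ t) (q : Fin n) : sigmaF SM0 Sc T t q = 1 := by
  cases t with
  | zero => rfl
  | succ t' => rw [sigmaF, dif_neg (by omega)]

/-- Lemma A: the run of `SMnew` is the relabeled run of `SM0`, in any scenario. -/
lemma run_SMnew (SM0 : Fin r → Fin n → (Fin n → Option S) → S)
    (Sc : Scenario n r S) (T : Fin r → Fin n → S) (Sc' : Scenario n r S) :
    ∀ t, t ≤ r → ∀ q, run (SMnew SM0 Sc T) Sc' t q
      = sigmaF SM0 Sc T t q (run SM0 Sc' t q) := by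
  intro t
  induction t with
  | zero => intro _ q; rfl
  | succ t ih =>
    intro ht q
    have h : t < r := by omega
    rw [run, dif_pos h, run, dif_pos h, SMnew]
    congr 1
    congr 1
    funext q'
    by_cases hl : Sc'.loss ⟨t, h⟩ q' q
    · simp [hl]
    · simp [hl, ih (by omega) q']

/-- Lemma B1: compatibility at all rounds except possibly the last. -/
lemma SMnew_compat_lt (SM0 : Fin r → Fin n → (Fin n → Option S) → S)
    (Sc : Scenario n r S) (T : Fin r → Fin n → S)
    (t : Fin r) (ht : t.val + 1 < r) (p : Fin n) :
    SMnew SM0 Sc T t p (fIn Sc T t p) = T t p := by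
  haveI := Classical.decEq S
  rw [SMnew, sigmaF, dif_pos ht]
  have harg : (fun q => Option.map ((sigmaF SM0 Sc T t.val q).symm) (fIn Sc T t p q))
      = fun q => if Sc.loss ⟨t.val, Nat.lt_of_succ_lt ht⟩ q p then none
          else some ((sigmaF SM0 Sc T t.val q).symm (fExec Sc T t.val q)) := by
    funext q
    rw [fIn]
    have : (⟨t.val, Nat.lt_of_succ_lt ht⟩ : Fin r) = t := rfl
    rw [this]
    by_cases hl : Sc.loss t q p <;> simp [hl]
  have heq : (⟨t.val, Nat.lt_of_succ_lt ht⟩ : Fin r) = t := rfl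
  rw [harg, heq]
  exact @Equiv.swap_apply_left S (Classical.decEq S) _ _

/-- Lemma C: under `Sc` itself, `SMnew` follows the frozen execution
(up to the second-to-last state). -/
lemma run_SMnew_Sc (SM0 : Fin r → Fin n → (Fin n → Option S) → S)
    (Sc : Scenario n r S) (T : Fin r → Fin n → S) :
    ∀ t, t < r → ∀ q, run (SMnew SM0 Sc T) Sc t q = fExec Sc T t q := by
  intro t
  induction t with
  | zero => intro _ q; rfl
  | succ t ih =>
    intro ht q
    have h : t < r := by omega
    rw [run, dif_pos h, fExec, dif_pos h]
    have harg : (fun q' => if Sc.loss ⟨t, h⟩ q' q then none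
        else some (run (SMnew SM0 Sc T) Sc t q'))
        = fIn Sc T ⟨t, h⟩ q := by
      funext q'
      rw [fIn]
      by_cases hl : Sc.loss ⟨t, h⟩ q' q <;> simp [hl, ih (by omega) q']
    rw [harg]
    exact SMnew_compat_lt SM0 Sc T ⟨t, h⟩ (by simpa using ht) q

end Aux

/-- Group Freezing Preserves Completeness. -/
theorem stmt_1 (n r : ℕ) (hn : 1 ≤ n) (hr : 1 ≤ r)
    (S : Type) [Fintype S] [Nonempty S]
    (Scen : Set (Scenario n r S)) (C : Scenario n r S → Set (Fin n → S))
    (hfeas : ∃ SM : Fin r → Fin n → (Fin n → Option S) → S,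
      ∀ Sc ∈ Scen, decision SM Sc ∈ C Sc)
    (Sc : Scenario n r S) (hSc : Sc ∈ Scen)
    (d : Fin n → S) (hd : C Sc = {d})
    (T : Fin r → Fin n → S)
    (hT : ∀ p : Fin n, T ⟨r - 1, by omega⟩ p = d p) :
    ∃ SM : Fin r → Fin n → (Fin n → Option S) → S,
      (∀ Sc' ∈ Scen, decision SM Sc' ∈ C Sc') ∧
      ∀ (t : Fin r) (p : Fin n), SM t p (fIn Sc T t p) = T t p := by
  obtain ⟨SM0, hSM0⟩ := hfeas
  refine ⟨SMnew SM0 Sc T, ?_, ?_⟩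
  · intro Sc' hSc'
    have hde : decision (SMnew SM0 Sc T) Sc' = decision SM0 Sc' := by
      funext p
      rw [decision, decision, run_SMnew SM0 Sc T Sc' r le_rfl p,
        sigmaF_top SM0 Sc T r le_rfl p]
      simp
    rw [hde]; exact hSM0 Sc' hSc'
  · intro t p
    by_cases ht : t.val + 1 < r
    · exact SMnew_compat_lt SM0 Sc T t ht p
    · have htv : t.val = r - 1 := by have := t.isLt; omega
      have hdec : decision SM0 Sc = d := by
        have := hSM0 Sc hSc; rw [hd] at this; exact this
      rw [SMnew, sigmaF_top SM0 Sc T (t.val + 1) (by omega) p]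
      have harg : (fun q => Option.map ((sigmaF SM0 Sc T t.val q).symm) (fIn Sc T t p q))
          = fun q => if Sc.loss t q p then none else some (run SM0 Sc t.val q) := by
        funext q
        have hrun : run (SMnew SM0 Sc T) Sc t.val q = fExec Sc T t.val q :=
          run_SMnew_Sc SM0 Sc T t.val t.isLt q
        have hrun2 : run (SMnew SM0 Sc T) Sc t.val q
            = sigmaF SM0 Sc T t.val q (run SM0 Sc t.val q) :=
          run_SMnew SM0 Sc T Sc t.val (le_of_lt t.isLt) q
        have hsy : (sigmaF SM0 Sc T t.val q).symm (fExec Sc T t.val q)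
            = run SM0 Sc t.val q := by
          rw [← hrun, hrun2, Equiv.symm_apply_apply]
        rw [fIn]
        by_cases hl : Sc.loss t q p <;> simp [hl, hsy]
      rw [harg]
      have hstep : SM0 t p (fun q => if Sc.loss t q p then none
          else some (run SM0 Sc t.val q)) = run SM0 Sc (t.val + 1) p := by
        rw [run, dif_pos t.isLt]
      have hfin : t.val + 1 = r := by have := t.isLt; omega
      have hTt : T t p = d p := by
        have heq : t = ⟨r - 1, by omega⟩ := Fin.ext htv
        rw [heq]; exact hT p
      have hrp : run SM0 Sc r p = d p := congrFun hdec p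
      simp only [Equiv.Perm.coe_one, id_eq]
      rw [hstep, hfin, hrp, hTt]
end

section
/- (Swap equivalence lemma.) Let SM be a state machine, let t be a round index with t+1 < r, let p be a process, and let B, C ∈ S with σ = Equiv.swap B C. Define a state machine SM' by: SM' t p v = σ (SM t p v) for every input v; SM' (t+1) q w = SM (t+1) q (Function.update w p ((w p).map σ)) for every process q and every input w (σ is an involution, so σ⁻¹ = σ); and SM' agrees with SM at all other (round, process) pairs. Then SM and SM' are equivalent: for every scenario, SM and SM' have the same decision vector. -/
theorem run_step {n r : ℕ} {S : Type} (SM : Fin r → Fin n → (Fin n → Option S) → S)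
    (Sc : Scenario n r S) (m : ℕ) (h : m < r) (q : Fin n) :
    run SM Sc (m + 1) q =
      SM ⟨m, h⟩ q (fun q' => if Sc.loss ⟨m, h⟩ q' q then none else some (run SM Sc m q')) := by
  rw [run, dif_pos h]

/-- Swap equivalence lemma. -/
theorem stmt_2 (n r : ℕ) (hn : 1 ≤ n) (hr : 1 ≤ r)
    (S : Type) [Fintype S] [Nonempty S] [DecidableEq S]
    (SM SM' : Fin r → Fin n → (Fin n → Option S) → S)
    (t : Fin r) (ht : t.val + 1 < r) (p : Fin n)
    (B C : S) (σ : Equiv.Perm S) (hσ : σ = Equiv.swap B C)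
    (h1 : ∀ v : Fin n → Option S, SM' t p v = σ (SM t p v))
    (h2 : ∀ (q : Fin n) (w : Fin n → Option S),
      SM' ⟨t.val + 1, ht⟩ q w =
        SM ⟨t.val + 1, ht⟩ q (Function.update w p ((w p).map (fun x => σ x))))
    (h3 : ∀ (u : Fin r) (q : Fin n), ¬(u = t ∧ q = p) → u ≠ ⟨t.val + 1, ht⟩ →
      ∀ v : Fin n → Option S, SM' u q v = SM u q v) :
    ∀ Sc : Scenario n r S, decision SM Sc = decision SM' Sc := by
  intro Sc
  have hσσ : ∀ x, σ (σ x) = x := by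
    intro x; rw [hσ]; exact Equiv.swap_apply_self B C x
  -- Lemma A: equal up to time t
  have hA : ∀ m, m ≤ t.val → run SM' Sc m = run SM Sc m := by
    intro m
    induction m with
    | zero => intro _; rfl
    | succ k ih =>
      intro hk
      have hk' : k ≤ t.val := by omega
      have hkr : k < r := by omega
      funext q
      rw [run_step SM' Sc k hkr, run_step SM Sc k hkr, ih hk']
      apply h3
      · rintro ⟨h, _⟩
        have : k = t.val := congrArg Fin.val h
        omega
      · intro h
        have : k = t.val + 1 := congrArg Fin.val h
        omega
  -- Lemma B: at time t+1
  have hB : ∀ q, run SM' Sc (t.val + 1) q =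
      if q = p then σ (run SM Sc (t.val + 1) q) else run SM Sc (t.val + 1) q := by
    intro q
    have htr : t.val < r := t.isLt
    have hteq : (⟨t.val, htr⟩ : Fin r) = t := Fin.ext rfl
    rw [run_step SM' Sc t.val htr, run_step SM Sc t.val htr, hA t.val le_rfl, hteq]
    by_cases hq : q = p
    · rw [if_pos hq, hq, h1]
    · rw [if_neg hq]
      apply h3
      · rintro ⟨_, h⟩; exact hq h
      · intro h
        have : t.val = t.val + 1 := congrArg Fin.val h
        omega
  -- Lemma C: equal at time t+2
  have hC : run SM' Sc (t.val + 2) = run SM Sc (t.val + 2) := by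
    funext q
    rw [show t.val + 2 = t.val + 1 + 1 from rfl,
      run_step SM' Sc (t.val + 1) ht, run_step SM Sc (t.val + 1) ht, h2]
    congr 1
    funext q'
    by_cases hq' : q' = p
    · subst hq'
      rw [Function.update_self, hB]
      simp only [if_pos rfl]
      by_cases hl : Sc.loss ⟨t.val + 1, ht⟩ q' q
      · simp [hl]
      · simp [hl, hσσ]
    · rw [Function.update_of_ne hq', hB, if_neg hq']
  -- Lemma D: equal from t+2 on
  have hD : ∀ m, t.val + 2 ≤ m → run SM' Sc m = run SM Sc m := by
    intro m
    induction m with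
    | zero => omega
    | succ k ih =>
      intro hk
      rcases Nat.lt_or_ge (t.val + 2) (k + 1) with h | h
      · have hk2 : t.val + 2 ≤ k := by omega
        funext q
        by_cases hkr : k < r
        · rw [run_step SM' Sc k hkr, run_step SM Sc k hkr, ih hk2]
          apply h3
          · rintro ⟨he, _⟩
            have : k = t.val := congrArg Fin.val he
            omega
          · intro he
            have : k = t.val + 1 := congrArg Fin.val he
            omega
        · show run SM' Sc (k+1) q = run SM Sc (k+1) q
          rw [run, dif_neg hkr, run, dif_neg hkr, ih hk2]
      · have : k + 1 = t.val + 2 := by omega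
        rw [this, hC]
  funext q
  show run SM Sc r q = run SM' Sc r q
  rw [hD r (by omega)]
end

section
/- (Frozen-path realization at non-final rounds.) Let SM₀ be any state machine, Sc any scenario, and T any frozen path under Sc. Then there exists a state machine SM that is equivalent to SM₀ (same decision vector under every scenario) and compatible with T under Sc at every non-final round: SM t p (fin t p) = T t p for all processes p and all rounds t with t+1 < r. -/
/-- Per-time, per-process encoding permutations used to conjugate `SM₀`. -/
noncomputable def encA {n r : ℕ} {S : Type} [DecidableEq S]
    (SM₀ : Fin r → Fin n → (Fin n → Option S) → S)
    (Sc : Scenario n r S) (T : Fin r → Fin n → S) : ℕ → Fin n → Equiv.Perm S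
  | 0 => fun _ => Equiv.refl S
  | t + 1 => fun p =>
      if h : t + 1 < r then
        Equiv.swap
          (SM₀ ⟨t, Nat.lt_of_succ_lt h⟩ p
            (fun q => (fIn Sc T ⟨t, Nat.lt_of_succ_lt h⟩ p q).map
              (encA SM₀ Sc T t q).symm))
          (T ⟨t, Nat.lt_of_succ_lt h⟩ p)
      else Equiv.refl S

/-- Frozen-path realization at non-final rounds. -/
theorem stmt_3 (n r : ℕ) (hn : 1 ≤ n) (hr : 1 ≤ r)
    (S : Type) [Fintype S] [Nonempty S]
    (SM₀ : Fin r → Fin n → (Fin n → Option S) → S)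
    (Sc : Scenario n r S) (T : Fin r → Fin n → S) :
    ∃ SM : Fin r → Fin n → (Fin n → Option S) → S,
      (∀ Sc' : Scenario n r S, decision SM Sc' = decision SM₀ Sc') ∧
      ∀ t : Fin r, t.val + 1 < r → ∀ p : Fin n, SM t p (fIn Sc T t p) = T t p := by
  classical
  set e := encA SM₀ Sc T with he
  -- encoding is trivial at times ≥ r
  have henc_ge : ∀ s, r ≤ s → ∀ p, e s p = Equiv.refl S := by
    intro s hs p
    match s, hs with
    | t + 1, hs =>
      rw [he]
      simp only [encA]
      rw [dif_neg (by omega)]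
    | 0, hs =>
      have : r = 0 := Nat.le_zero.mp hs
      omega
  refine ⟨fun t p v => e (t.val + 1) p (SM₀ t p (fun q => (v q).map (e t.val q).symm)), ?_, ?_⟩
  · intro Sc'
    have key : ∀ s p, run (fun t p v => e (t.val + 1) p
        (SM₀ t p (fun q => (v q).map (e t.val q).symm))) Sc' s p
        = e s p (run SM₀ Sc' s p) := by
      intro s
      induction s with
      | zero => intro p; simp [run, he, encA]
      | succ t ih =>
        intro p
        by_cases h : t < r
        · simp only [run, dif_pos h]
          congr 1
          congr 1
          funext q
          split
          · simp
          · simp [ih q]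
        · simp only [run, dif_neg h]
          rw [ih p, henc_ge t (by omega) p, henc_ge (t + 1) (by omega) p]
    funext p
    simp only [decision, key, henc_ge r le_rfl]
    rfl
  · intro t ht p
    have h1 : t.val + 1 < r := ht
    show e (t.val + 1) p _ = _
    rw [he]
    conv_lhs => rw [show t.val + 1 = t.val + 1 from rfl]
    simp only [encA, dif_pos h1]
    rw [← he]
    have : (⟨t.val, Nat.lt_of_succ_lt h1⟩ : Fin r) = t := Fin.eta t _
    rw [this]
    exact Equiv.swap_apply_left _ _
end

section
/- (Existence of a failure-free round.) Let f be a natural number with r = f + 1, and let crash : Fin n → Option (Fin r) be a crash pattern such that the set of faulty processes {q | crash q ≠ none} has cardinality at most f. Then some round is failure-free: there exists t : Fin r such that crash q ≠ some t for every process q. -/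
/-- Existence of a failure-free round. -/
theorem stmt_5 (n f r : ℕ) (hr : r = f + 1)
    (crash : Fin n → Option (Fin r))
    (h : (Finset.univ.filter fun q => crash q ≠ none).card ≤ f) :
    ∃ t : Fin r, ∀ q : Fin n, crash q ≠ some t := by
  by_contra hc
  push_neg at hc
  choose g hg using hc
  have hinj : Function.Injective g := by
    intro s t hst
    have := hg s
    rw [hst, hg t] at this
    exact (Option.some_injective _ this).symm
  have hmap : ∀ t, g t ∈ Finset.univ.filter fun q => crash q ≠ none := by
    intro t
    simp [hg t]
  have hcard : r ≤ (Finset.univ.filter fun q => crash q ≠ none).card := by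
    have := Finset.card_le_card_of_injOn (s := Finset.univ) g (fun t _ => hmap t) (hinj.injOn)
    simpa using this
  omega
end
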